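/- Fix k ∈ ℕ and f ∈ C^k([-1,1]^d), and let g(θ) := f(cos θ₁, …, cos θ_d). For every multi-index α ∈ ℕ^d with |α| ≤ k there exist trigonometric polynomials P_{α,β}(θ), indexed by multi-indices β with 0 ≤ β ≤ α coordinate-wise, each of degree at most |α| in every variable θ_i, such that ∂_θ^α g(θ) = Σ_{0 ≤ β ≤ α} P_{α,β}(θ) · (∂_x^β f)(cos θ) for all θ ∈ [0,π]^d, and sup_{θ ∈ [0,π]^d} |P_{α,β}(θ)| ≤ |α|! for all 0 ≤ β ≤ α. -/

import Mathlib

open scoped ENNReal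
open MeasureTheory

noncomputable section

/-- The cube `[-1,1]^d`. -/
def cube (d : ℕ) : Set (Fin d → ℝ) := Set.univ.pi fun _ => Set.Icc (-1 : ℝ) 1

/-- Two datasets differ in at most one entry. -/
def Adjacent {n : ℕ} {Ω : Type*} (X X' : Fin n → Ω) : Prop :=
  ∃ i₀ : Fin n, ∀ i, i ≠ i₀ → X i = X' i

/-- Partial derivative in the `i`-th coordinate direction. -/
def pderiv' {d : ℕ} (i : Fin d) (f : (Fin d → ℝ) → ℝ) : (Fin d → ℝ) → ℝ :=
  fun x => fderiv ℝ f x (Pi.single i 1)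

/-- Multi-index partial derivative `∂^α`. -/
def mderiv {d : ℕ} (α : Fin d → ℕ) (f : (Fin d → ℝ) → ℝ) : (Fin d → ℝ) → ℝ :=
  (List.finRange d).foldr (fun i g => (pderiv' i)^[α i] g) f

/-- Order `|α| = Σ αᵢ` of a multi-index. -/
def mdeg {d : ℕ} (α : Fin d → ℕ) : ℕ := ∑ i, α i

/-- The `k`-smooth class `F_k` on `[-1,1]^d`: `C^k` functions all of whose partial
derivatives of order between `1` and `k` are bounded by `1` on the cube. -/
def memFk (d k : ℕ) (f : (Fin d → ℝ) → ℝ) : Prop :=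
  ContDiff ℝ k f ∧
  ∀ α : Fin d → ℕ, 1 ≤ mdeg α → mdeg α ≤ k → ∀ x ∈ cube d, |mderiv α f x| ≤ 1

/-- The integral probability metric `d_k` associated with `F_k`. -/
def dIPM (d k : ℕ) (p q : Measure (Fin d → ℝ)) : ℝ :=
  ⨆ f : {f : (Fin d → ℝ) → ℝ // memFk d k f}, |(∫ x, f.1 x ∂p) - ∫ x, f.1 x ∂q|

/-- Empirical measure of a dataset. -/
def empMeasure {d n : ℕ} (X : Fin n → (Fin d → ℝ)) : Measure (Fin d → ℝ) :=
  (n : ℝ≥0∞)⁻¹ • ∑ i, Measure.dirac (X i)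

/-- Empirical measure of a finite tuple encoded as (length, sequence). -/
def empOut {d : ℕ} (y : ℕ × (ℕ → Fin d → ℝ)) : Measure (Fin d → ℝ) :=
  (y.1 : ℝ≥0∞)⁻¹ • ∑ i ∈ Finset.range y.1, Measure.dirac (y.2 i)

/-- Total variation distance between two measures. -/
def tvDist {α : Type*} [MeasurableSpace α] (P Q : Measure α) : ℝ :=
  ⨆ S : {S : Set α // MeasurableSet S}, |(P S.1).toReal - (Q S.1).toReal|

/-- Normalized one-dimensional Chebyshev polynomial. -/
def TbarN (n : ℕ) (x : ℝ) : ℝ :=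
  if n = 0 then 1 else Real.sqrt 2 * Real.cos (n * Real.arccos x)

/-- Normalized multivariate Chebyshev polynomial `T̄_K`. -/
def TbarK {d : ℕ} (K : Fin d → ℕ) (x : Fin d → ℝ) : ℝ := ∏ i, TbarN (K i) (x i)

/-- Normalized cosine functions `ψ_n`. -/
def psiN (n : ℕ) (t : ℝ) : ℝ := if n = 0 then 1 else Real.sqrt 2 * Real.cos (n * t)

/-- Multivariate cosine basis `ψ_K`. -/
def psiK {d : ℕ} (K : Fin d → ℕ) (θ : Fin d → ℝ) : ℝ := ∏ i, psiN (K i) (θ i)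

/-- Chebyshev weight probability measure `dμ(x) = dx/(π√(1-x²))` on `[-1,1]`. -/
def chebMeasure : Measure ℝ :=
  (volume.restrict (Set.Icc (-1 : ℝ) 1)).withDensity
    fun x => ENNReal.ofReal (1 / (Real.pi * Real.sqrt (1 - x ^ 2)))

/-- Product Chebyshev measure `μ_d` on `[-1,1]^d`. -/
def chebMeasureD (d : ℕ) : Measure (Fin d → ℝ) := Measure.pi fun _ => chebMeasure

/-- Normalized Lebesgue measure `π⁻¹ dθ` on `[0,π]`. -/
def thetaMeasure : Measure ℝ :=
  ENNReal.ofReal (1 / Real.pi) • volume.restrict (Set.Icc (0 : ℝ) Real.pi)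

/-- Product measure `π^{-d} dθ` on `[0,π]^d`. -/
def thetaMeasureD (d : ℕ) : Measure (Fin d → ℝ) := Measure.pi fun _ => thetaMeasure

/-- `‖K‖₂` for a multi-index `K`. -/
def normK {d : ℕ} (K : Fin d → ℕ) : ℝ := Real.sqrt (∑ i, ((K i : ℝ)) ^ 2)

/-- `P` is a trigonometric polynomial of degree at most `D` in each of the `d` variables. -/
def IsTrigPoly (d D : ℕ) (P : (Fin d → ℝ) → ℝ) : Prop :=
  ∃ a : ((Fin d → ℕ) × (Fin d → Bool)) → ℝ,
    ∀ θ, P θ =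
      ∑ p ∈ (Fintype.piFinset fun _ : Fin d => Finset.range (D + 1)) ×ˢ
          (Finset.univ : Finset (Fin d → Bool)),
        a p * ∏ i, (if p.2 i then Real.sin ((p.1 i : ℝ) * θ i) else Real.cos ((p.1 i : ℝ) * θ i))

namespace ChainAux

variable {d : ℕ}

def E (p : (Fin d → ℕ) × (Fin d → Bool)) (θ : Fin d → ℝ) : ℝ :=
  ∏ i, (if p.2 i then Real.sin ((p.1 i : ℝ) * θ i) else Real.cos ((p.1 i : ℝ) * θ i))

def idxT (d D : ℕ) : Finset ((Fin d → ℕ) × (Fin d → Bool)) :=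
  (Fintype.piFinset fun _ : Fin d => Finset.range (D + 1)) ×ˢ Finset.univ

def TB (D : ℕ) (C : ℝ) (P : (Fin d → ℝ) → ℝ) : Prop :=
  ∃ a : ((Fin d → ℕ) × (Fin d → Bool)) → ℝ,
    (∀ θ, P θ = ∑ p ∈ idxT d D, a p * E p θ) ∧ ∑ p ∈ idxT d D, |a p| ≤ C

lemma contDiff_finprod {ι : Type*} (s : Finset ι) (g : ι → (Fin d → ℝ) → ℝ)
    (h : ∀ i ∈ s, ContDiff ℝ ⊤ (g i)) :
    ContDiff ℝ ⊤ (fun θ => ∏ i ∈ s, g i θ) := by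
  classical
  induction s using Finset.cons_induction with
  | empty => simpa using contDiff_const
  | cons i s hi ih =>
    simp only [Finset.prod_cons]
    exact (h i (Finset.mem_cons_self i s)).mul
      (ih fun j hj => h j (Finset.mem_cons_of_mem hj))

lemma contDiff_E (p : (Fin d → ℕ) × (Fin d → Bool)) : ContDiff ℝ ⊤ (E p) := by
  unfold E
  apply contDiff_finprod
  intro i _
  cases h : p.2 i <;> simp only [h, Bool.false_eq_true, if_true, if_false]
  · exact Real.contDiff_cos.comp (contDiff_const.mul
      (ContinuousLinearMap.proj i : (Fin d → ℝ) →L[ℝ] ℝ).contDiff)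
  · exact Real.contDiff_sin.comp (contDiff_const.mul
      (ContinuousLinearMap.proj i : (Fin d → ℝ) →L[ℝ] ℝ).contDiff)

lemma abs_E_le_one (p : (Fin d → ℕ) × (Fin d → Bool)) (θ : Fin d → ℝ) : |E p θ| ≤ 1 := by
  rw [E, Finset.abs_prod]
  apply Finset.prod_le_one (fun i _ => abs_nonneg _)
  intro i _
  cases h : p.2 i <;> simp only [h, Bool.false_eq_true, if_true, if_false]
  · exact Real.abs_cos_le_one _
  · exact Real.abs_sin_le_one _

lemma TB.bound {D : ℕ} {C : ℝ} {P : (Fin d → ℝ) → ℝ} (h : TB D C P) (θ : Fin d → ℝ) :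
    |P θ| ≤ C := by
  obtain ⟨a, hrep, hsum⟩ := h
  rw [hrep θ]
  calc |∑ p ∈ idxT d D, a p * E p θ| ≤ ∑ p ∈ idxT d D, |a p * E p θ| :=
        Finset.abs_sum_le_sum_abs _ _
    _ ≤ ∑ p ∈ idxT d D, |a p| := by
        apply Finset.sum_le_sum
        intro p _
        rw [abs_mul]
        calc |a p| * |E p θ| ≤ |a p| * 1 :=
              mul_le_mul_of_nonneg_left (abs_E_le_one p θ) (abs_nonneg _)
          _ = |a p| := mul_one _
    _ ≤ C := hsum

lemma TB.contDiff {D : ℕ} {C : ℝ} {P : (Fin d → ℝ) → ℝ} (h : TB D C P) :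
    ContDiff ℝ ⊤ P := by
  obtain ⟨a, hrep, -⟩ := h
  have : P = fun θ => ∑ p ∈ idxT d D, a p * E p θ := funext hrep
  rw [this]
  exact ContDiff.sum fun p _ => contDiff_const.mul (contDiff_E p)

lemma TB.mono {D D' : ℕ} {C C' : ℝ} {P : (Fin d → ℝ) → ℝ} (h : TB D C P)
    (hD : D ≤ D') (hC : C ≤ C') : TB D' C' P := by
  classical
  obtain ⟨a, hrep, hsum⟩ := h
  have hsub : idxT d D ⊆ idxT d D' := by
    intro p hp
    simp only [idxT, Finset.mem_product, Fintype.mem_piFinset, Finset.mem_range] at hp ⊢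
    exact ⟨fun j => lt_of_lt_of_le (hp.1 j) (by omega), hp.2⟩
  refine ⟨fun p => if p ∈ idxT d D then a p else 0, fun θ => ?_, ?_⟩
  · rw [hrep θ]
    rw [← Finset.sum_subset hsub (fun p _ hp => by simp [hp])]
    exact Finset.sum_congr rfl fun p hp => by simp [hp]
  · rw [← Finset.sum_subset hsub (fun p _ hp => by simp [hp])]
    calc ∑ p ∈ idxT d D, |if p ∈ idxT d D then a p else 0| = ∑ p ∈ idxT d D, |a p| :=
          Finset.sum_congr rfl fun p hp => by simp [hp]
      _ ≤ C := hsum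
      _ ≤ C' := hC

lemma TB.zero {D : ℕ} {C : ℝ} (hC : 0 ≤ C) : TB D C (fun _ : Fin d → ℝ => 0) :=
  ⟨0, fun θ => by simp, by simpa using hC⟩

lemma TB.add {D : ℕ} {C₁ C₂ : ℝ} {P Q : (Fin d → ℝ) → ℝ} (hP : TB D C₁ P) (hQ : TB D C₂ Q) :
    TB D (C₁ + C₂) (fun θ => P θ + Q θ) := by
  obtain ⟨a, ha, has⟩ := hP
  obtain ⟨b, hb, hbs⟩ := hQ
  refine ⟨a + b, fun θ => ?_, ?_⟩
  · simp only [ha θ, hb θ, Pi.add_apply, add_mul, Finset.sum_add_distrib]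
  · calc ∑ p ∈ idxT d D, |(a + b) p| ≤ ∑ p ∈ idxT d D, (|a p| + |b p|) :=
        Finset.sum_le_sum fun p _ => abs_add_le _ _
      _ = _ := Finset.sum_add_distrib
      _ ≤ C₁ + C₂ := add_le_add has hbs

lemma TB.smul {D : ℕ} {C : ℝ} {P : (Fin d → ℝ) → ℝ} (c : ℝ) (hP : TB D C P) :
    TB D (|c| * C) (fun θ => c * P θ) := by
  obtain ⟨a, ha, has⟩ := hP
  refine ⟨fun p => c * a p, fun θ => ?_, ?_⟩
  · show c * P θ = _
    rw [ha θ, Finset.mul_sum]; exact Finset.sum_congr rfl fun p _ => (mul_assoc _ _ _).symm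
  · simp only [abs_mul]
    rw [← Finset.mul_sum]
    exact mul_le_mul_of_nonneg_left has (abs_nonneg c)

lemma TB.sum {ι : Type*} {D : ℕ} (s : Finset ι) (C : ι → ℝ) (P : ι → (Fin d → ℝ) → ℝ)
    (h : ∀ j ∈ s, TB D (C j) (P j)) :
    TB D (∑ j ∈ s, C j) (fun θ => ∑ j ∈ s, P j θ) := by
  classical
  induction s using Finset.cons_induction with
  | empty => simpa using TB.zero le_rfl
  | cons j s hj ih =>
    simp only [Finset.sum_cons]
    exact (h j (Finset.mem_cons_self j s)).add (ih fun m hm => h m (Finset.mem_cons_of_mem hm))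

lemma TB.single {D : ℕ} (q : (Fin d → ℕ) × (Fin d → Bool)) (hq : q ∈ idxT d D) (c : ℝ) :
    TB D |c| (fun θ => c * E q θ) := by
  classical
  refine ⟨fun p => if p = q then c else 0, fun θ => ?_, ?_⟩
  · rw [Finset.sum_eq_single q]
    · simp
    · intro p _ hpq; simp [hpq]
    · intro h; exact absurd hq h
  · rw [Finset.sum_eq_single q]
    · simp
    · intro p _ hpq; simp [hpq]
    · intro h; exact absurd hq h



lemma hasDerivAt_slice {F : (Fin d → ℝ) → ℝ} {θ : Fin d → ℝ} (i : Fin d)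
    (hF : DifferentiableAt ℝ F θ) :
    HasDerivAt (fun t => F (Function.update θ i t)) (pderiv' i F θ) (θ i) := by
  have hline : ∀ t : ℝ, Function.update θ i t = θ + (t - θ i) • (Pi.single i 1 : Fin d → ℝ) := by
    intro t; funext j
    by_cases hj : j = i
    · subst hj; simp
    · simp [Function.update_of_ne hj, Pi.single_eq_of_ne hj]
  have hg : HasDerivAt (fun t : ℝ => θ + (t - θ i) • (Pi.single i 1 : Fin d → ℝ))
      ((Pi.single i 1 : Fin d → ℝ)) (θ i) := by
    have h1 : HasDerivAt (fun t : ℝ => t - θ i) 1 (θ i) :=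
      (hasDerivAt_id (θ i)).sub_const (θ i)
    have h2 := (h1.smul_const ((Pi.single i 1 : Fin d → ℝ))).const_add θ
    simpa using h2
  have hFθ : HasFDerivAt F (fderiv ℝ F θ)
      (θ + ((θ i : ℝ) - θ i) • (Pi.single i 1 : Fin d → ℝ)) := by
    simpa using hF.hasFDerivAt
  have hcomp := hFθ.comp_hasDerivAt (θ i) hg
  have heq : (fun t => F (Function.update θ i t)) =
      F ∘ fun t : ℝ => θ + (t - θ i) • (Pi.single i 1 : Fin d → ℝ) := by
    funext t; simp [hline t, Function.comp]
  rw [heq]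
  exact hcomp

lemma pderiv_eq_of_hasDerivAt {F : (Fin d → ℝ) → ℝ} {θ : Fin d → ℝ} {i : Fin d} {D : ℝ}
    (hF : DifferentiableAt ℝ F θ)
    (hD : HasDerivAt (fun t => F (Function.update θ i t)) D (θ i)) :
    pderiv' i F θ = D :=
  (hasDerivAt_slice i hF).unique hD




/-- the product over all coordinates except `i` -/
def Ki (i : Fin d) (p : (Fin d → ℕ) × (Fin d → Bool)) (θ : Fin d → ℝ) : ℝ :=
  ∏ j ∈ Finset.univ \ {i}, (if p.2 j then Real.sin ((p.1 j : ℝ) * θ j) else Real.cos ((p.1 j : ℝ) * θ j))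

lemma E_split (i : Fin d) (p : (Fin d → ℕ) × (Fin d → Bool)) (θ : Fin d → ℝ) :
    E p θ = (if p.2 i then Real.sin ((p.1 i : ℝ) * θ i) else Real.cos ((p.1 i : ℝ) * θ i)) * Ki i p θ :=
  Finset.prod_eq_mul_prod_sdiff_singleton_of_mem (Finset.mem_univ i) _

lemma Ki_update (i : Fin d) (p : (Fin d → ℕ) × (Fin d → Bool)) (m : ℕ) (b : Bool) (θ : Fin d → ℝ) :
    Ki i (Function.update p.1 i m, Function.update p.2 i b) θ = Ki i p θ := by
  unfold Ki
  apply Finset.prod_congr rfl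
  intro j hj
  have hji : j ≠ i := by simp at hj; exact hj
  simp [Function.update_of_ne hji]

lemma Ki_update_theta (i : Fin d) (p : (Fin d → ℕ) × (Fin d → Bool)) (t : ℝ) (θ : Fin d → ℝ) :
    Ki i p (Function.update θ i t) = Ki i p θ := by
  unfold Ki
  apply Finset.prod_congr rfl
  intro j hj
  have hji : j ≠ i := by simp at hj; exact hj
  simp [Function.update_of_ne hji]

lemma E_update (i : Fin d) (p : (Fin d → ℕ) × (Fin d → Bool)) (t : ℝ) (θ : Fin d → ℝ) :
    E p (Function.update θ i t) =
      (if p.2 i then Real.sin ((p.1 i : ℝ) * t) else Real.cos ((p.1 i : ℝ) * t)) * Ki i p θ := by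
  rw [E_split i, Ki_update_theta]
  simp

/-- bit-flip at coordinate i -/
def flip (p : (Fin d → ℕ) × (Fin d → Bool)) (i : Fin d) : (Fin d → ℕ) × (Fin d → Bool) :=
  (p.1, Function.update p.2 i (!p.2 i))

def sE (p : (Fin d → ℕ) × (Fin d → Bool)) (i : Fin d) : ℝ :=
  if p.2 i then (p.1 i : ℝ) else -(p.1 i : ℝ)

lemma E_flip_split (i : Fin d) (p : (Fin d → ℕ) × (Fin d → Bool)) (θ : Fin d → ℝ) :
    E (flip p i) θ =
      (if p.2 i then Real.cos ((p.1 i : ℝ) * θ i) else Real.sin ((p.1 i : ℝ) * θ i)) * Ki i p θ := by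
  rw [E_split i]
  unfold flip
  have h1 : Ki i (p.1, Function.update p.2 i (!p.2 i)) θ = Ki i p θ := by
    unfold Ki
    apply Finset.prod_congr rfl
    intro j hj
    have hji : j ≠ i := by simp at hj; exact hj
    simp [Function.update_of_ne hji]
  rw [h1]
  cases hb : p.2 i <;> simp [hb]

lemma hasDerivAt_E_slice (i : Fin d) (p : (Fin d → ℕ) × (Fin d → Bool)) (θ : Fin d → ℝ) :
    HasDerivAt (fun t => E p (Function.update θ i t)) (sE p i * E (flip p i) θ) (θ i) := by
  have hrw : (fun t => E p (Function.update θ i t)) =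
      fun t => (if p.2 i then Real.sin ((p.1 i : ℝ) * t) else Real.cos ((p.1 i : ℝ) * t)) * Ki i p θ := by
    funext t; exact E_update i p t θ
  rw [hrw, E_flip_split]
  have hc : HasDerivAt (fun t : ℝ => (p.1 i : ℝ) * t) ((p.1 i : ℝ)) (θ i) := by
    simpa using (hasDerivAt_id (θ i)).const_mul ((p.1 i : ℝ))
  cases hb : p.2 i
  · -- cos case: derivative -sin * n
    simp only [hb, Bool.false_eq_true, if_false]
    have h1 : HasDerivAt (fun t : ℝ => Real.cos ((p.1 i : ℝ) * t))
        (-Real.sin ((p.1 i : ℝ) * θ i) * (p.1 i : ℝ)) (θ i) :=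
      (Real.hasDerivAt_cos _).comp (θ i) hc
    have := h1.mul_const (Ki i p θ)
    refine this.congr_deriv ?_
    simp [sE, hb]; ring
  · simp only [hb, if_true]
    have h1 : HasDerivAt (fun t : ℝ => Real.sin ((p.1 i : ℝ) * t))
        (Real.cos ((p.1 i : ℝ) * θ i) * (p.1 i : ℝ)) (θ i) :=
      (Real.hasDerivAt_sin _).comp (θ i) hc
    have := h1.mul_const (Ki i p θ)
    refine this.congr_deriv ?_
    simp [sE, hb]; ring




lemma flip_flip (p : (Fin d → ℕ) × (Fin d → Bool)) (i : Fin d) : flip (flip p i) i = p := by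
  unfold flip
  ext j
  · rfl
  · simp only []
    by_cases hj : j = i
    · subst hj; simp
    · simp [Function.update_of_ne hj]

lemma mem_idxT {D : ℕ} {p : (Fin d → ℕ) × (Fin d → Bool)} :
    p ∈ idxT d D ↔ ∀ j, p.1 j < D + 1 := by
  simp [idxT, Fintype.mem_piFinset]

lemma flip_mem_idxT {D : ℕ} {p : (Fin d → ℕ) × (Fin d → Bool)} (i : Fin d)
    (hp : p ∈ idxT d D) : flip p i ∈ idxT d D := by
  rw [mem_idxT] at hp ⊢; exact hp


lemma TB.pderiv {D : ℕ} {C : ℝ} {P : (Fin d → ℝ) → ℝ} (i : Fin d) (h : TB D C P) :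
    TB D (D * C) (pderiv' i P) := by
  classical
  obtain ⟨a, hrep, hsum⟩ := h
  have hPfun : P = fun θ => ∑ p ∈ idxT d D, a p * E p θ := funext hrep
  subst hPfun
  refine ⟨fun q => a (flip q i) * sE (flip q i) i, fun θ => ?_, ?_⟩
  · have hdiff : DifferentiableAt ℝ (fun θ : Fin d → ℝ => ∑ p ∈ idxT d D, a p * E p θ) θ :=
      DifferentiableAt.fun_sum fun p _ =>
        (contDiff_const.mul (contDiff_E p)).differentiable (by simp) |>.differentiableAt
    have hD : HasDerivAt (fun t => ∑ p ∈ idxT d D, a p * E p (Function.update θ i t))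
        (∑ p ∈ idxT d D, a p * (sE p i * E (flip p i) θ)) (θ i) :=
      HasDerivAt.fun_sum fun p _ => (hasDerivAt_E_slice i p θ).const_mul (a p)
    have heq := pderiv_eq_of_hasDerivAt hdiff hD
    rw [heq]
    refine Finset.sum_nbij' (fun p => flip p i) (fun q => flip q i) ?_ ?_ ?_ ?_ ?_
    · exact fun p hp => flip_mem_idxT i hp
    · exact fun q hq => flip_mem_idxT i hq
    · exact fun p _ => flip_flip p i
    · exact fun q _ => flip_flip q i
    · intro p _
      simp only [flip_flip]
      ring
  · calc ∑ q ∈ idxT d D, |a (flip q i) * sE (flip q i) i|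
        ≤ ∑ q ∈ idxT d D, (D : ℝ) * |a (flip q i)| := by
          apply Finset.sum_le_sum
          intro q hq
          rw [abs_mul]
          have h1 : |sE (flip q i) i| ≤ (D : ℝ) := by
            have := (mem_idxT.mp hq) i
            unfold sE flip
            have : (q.1 i : ℝ) ≤ (D : ℝ) := by exact_mod_cast Nat.lt_succ_iff.mp this
            rcases ite_eq_or_eq ((Function.update q.2 i (!q.2 i)) i) ((q.1 i : ℝ)) (-(q.1 i : ℝ)) with h | h <;>
              rw [h] <;> simp only [abs_neg, Nat.abs_cast] <;> exact this
          calc |a (flip q i)| * |sE (flip q i) i| ≤ |a (flip q i)| * D :=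
                mul_le_mul_of_nonneg_left h1 (abs_nonneg _)
            _ = (D:ℝ) * |a (flip q i)| := mul_comm _ _
      _ = (D : ℝ) * ∑ q ∈ idxT d D, |a (flip q i)| := (Finset.mul_sum _ _ _).symm
      _ = (D : ℝ) * ∑ p ∈ idxT d D, |a p| := by
          congr 1
          refine Finset.sum_nbij' (fun p => flip p i) (fun q => flip q i)
            (fun p hp => flip_mem_idxT i hp) (fun q hq => flip_mem_idxT i hq)
            (fun p _ => flip_flip p i) (fun q _ => flip_flip q i) ?_
          intro p _
          simp only [flip_flip]
      _ ≤ (D : ℝ) * C := mul_le_mul_of_nonneg_left hsum (by positivity)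


lemma sin_mul_E (i : Fin d) {D : ℕ} (p : (Fin d → ℕ) × (Fin d → Bool)) (hp : p ∈ idxT d D) :
    TB (D + 1) 1 (fun θ => Real.sin (θ i) * E p θ) := by
  classical
  set n := p.1 i with hn
  have hnD : n < D + 1 := mem_idxT.mp hp i
  cases hb : p.2 i
  · -- cos at i
    by_cases h0 : n = 0
    · -- sin θ * 1
      set q : (Fin d → ℕ) × (Fin d → Bool) := (Function.update p.1 i 1, Function.update p.2 i true) with hq
      have hqm : q ∈ idxT d (D + 1) := by
        rw [mem_idxT]
        intro j
        by_cases hj : j = i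
        · subst hj; simp [hq]
        · simp [hq, Function.update_of_ne hj]
          have := mem_idxT.mp hp j; omega
      have hfun : (fun θ => Real.sin (θ i) * E p θ) = fun θ => 1 * E q θ := by
        funext θ
        rw [E_split i p θ, E_split i q θ]
        have hK : Ki i q θ = Ki i p θ := Ki_update i p 1 true θ
        rw [hK]
        simp [hq, hb, ← hn, h0]
      rw [hfun]
      exact (TB.single q hqm 1).mono le_rfl (by norm_num)
    · have h1 : 1 ≤ n := Nat.one_le_iff_ne_zero.mpr h0
      set q₁ : (Fin d → ℕ) × (Fin d → Bool) := (Function.update p.1 i (n+1), Function.update p.2 i true) with hq₁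
      set q₂ : (Fin d → ℕ) × (Fin d → Bool) := (Function.update p.1 i (n-1), Function.update p.2 i true) with hq₂
      have hq₁m : q₁ ∈ idxT d (D + 1) := by
        rw [mem_idxT]; intro j
        by_cases hj : j = i
        · subst hj; simp [hq₁]; omega
        · simp [hq₁, Function.update_of_ne hj]; have := mem_idxT.mp hp j; omega
      have hq₂m : q₂ ∈ idxT d (D + 1) := by
        rw [mem_idxT]; intro j
        by_cases hj : j = i
        · subst hj; simp [hq₂]; omega
        · simp [hq₂, Function.update_of_ne hj]; have := mem_idxT.mp hp j; omega
      have hfun : (fun θ => Real.sin (θ i) * E p θ) =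
          fun θ => (1/2 : ℝ) * E q₁ θ + (-(1/2) : ℝ) * E q₂ θ := by
        funext θ
        rw [E_split i p θ, E_split i q₁ θ, E_split i q₂ θ, Ki_update i p (n+1) true θ,
          Ki_update i p (n-1) true θ]
        simp only [hq₁, hq₂, hb, Bool.false_eq_true, if_false, if_true,
          Function.update_self, ← hn]
        have e1 : Real.sin (((n + 1 : ℕ) : ℝ) * θ i) =
            Real.sin ((n : ℝ) * θ i) * Real.cos (θ i) + Real.cos ((n : ℝ) * θ i) * Real.sin (θ i) := by
          push_cast
          rw [add_mul, one_mul, Real.sin_add]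
        have e2 : Real.sin (((n - 1 : ℕ) : ℝ) * θ i) =
            Real.sin ((n : ℝ) * θ i) * Real.cos (θ i) - Real.cos ((n : ℝ) * θ i) * Real.sin (θ i) := by
          push_cast [Nat.cast_sub h1]
          rw [sub_mul, one_mul, Real.sin_sub]
        rw [e1, e2]
        ring
      rw [hfun]
      have := (TB.single q₁ hq₁m (1/2)).add (TB.single q₂ hq₂m (-(1/2)))
      exact this.mono le_rfl (by norm_num [abs_of_nonneg])
  · -- sin at i
    by_cases h0 : n = 0
    · refine ⟨0, fun θ => ?_, by simp⟩
      have hz : E p θ = 0 := by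
        rw [E_split i p θ]
        simp [hb, ← hn, h0]
      simp [hz]
    · have h1 : 1 ≤ n := Nat.one_le_iff_ne_zero.mpr h0
      set q₁ : (Fin d → ℕ) × (Fin d → Bool) := (Function.update p.1 i (n-1), Function.update p.2 i false) with hq₁
      set q₂ : (Fin d → ℕ) × (Fin d → Bool) := (Function.update p.1 i (n+1), Function.update p.2 i false) with hq₂
      have hq₁m : q₁ ∈ idxT d (D + 1) := by
        rw [mem_idxT]; intro j
        by_cases hj : j = i
        · subst hj; simp [hq₁]; omega
        · simp [hq₁, Function.update_of_ne hj]; have := mem_idxT.mp hp j; omega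
      have hq₂m : q₂ ∈ idxT d (D + 1) := by
        rw [mem_idxT]; intro j
        by_cases hj : j = i
        · subst hj; simp [hq₂]; omega
        · simp [hq₂, Function.update_of_ne hj]; have := mem_idxT.mp hp j; omega
      have hfun : (fun θ => Real.sin (θ i) * E p θ) =
          fun θ => (1/2 : ℝ) * E q₁ θ + (-(1/2) : ℝ) * E q₂ θ := by
        funext θ
        rw [E_split i p θ, E_split i q₁ θ, E_split i q₂ θ, Ki_update i p (n-1) false θ,
          Ki_update i p (n+1) false θ]
        simp only [hq₁, hq₂, hb, Bool.false_eq_true, if_false, if_true,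
          Function.update_self, ← hn]
        have e1 : Real.cos (((n - 1 : ℕ) : ℝ) * θ i) =
            Real.cos ((n : ℝ) * θ i) * Real.cos (θ i) + Real.sin ((n : ℝ) * θ i) * Real.sin (θ i) := by
          push_cast [Nat.cast_sub h1]
          rw [sub_mul, one_mul, Real.cos_sub]
        have e2 : Real.cos (((n + 1 : ℕ) : ℝ) * θ i) =
            Real.cos ((n : ℝ) * θ i) * Real.cos (θ i) - Real.sin ((n : ℝ) * θ i) * Real.sin (θ i) := by
          push_cast
          rw [add_mul, one_mul, Real.cos_add]
        rw [e1, e2]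
        ring
      rw [hfun]
      have := (TB.single q₁ hq₁m (1/2)).add (TB.single q₂ hq₂m (-(1/2)))
      exact this.mono le_rfl (by norm_num [abs_of_nonneg])

lemma TB.sin_mul {D : ℕ} {C : ℝ} {P : (Fin d → ℝ) → ℝ} (i : Fin d) (h : TB D C P) :
    TB (D + 1) C (fun θ => Real.sin (θ i) * P θ) := by
  classical
  obtain ⟨a, hrep, hsum⟩ := h
  have hfun : (fun θ => Real.sin (θ i) * P θ) =
      fun θ => ∑ p ∈ idxT d D, a p * (Real.sin (θ i) * E p θ) := by
    funext θ
    rw [hrep θ, Finset.mul_sum]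
    exact Finset.sum_congr rfl fun p _ => by ring
  rw [hfun]
  have := TB.sum (idxT d D) (fun p => |a p| * 1)
    (fun p θ => a p * (Real.sin (θ i) * E p θ))
    (fun p hp => (sin_mul_E i p hp).smul (a p))
  refine this.mono le_rfl ?_
  simp only [mul_one]
  exact hsum


section MderivLemmas

lemma foldr_congr_list {X : Type*} (T : Fin d → X → X) (β β' : Fin d → ℕ) (x : X) :
    ∀ L : List (Fin d), (∀ j ∈ L, β j = β' j) →
      L.foldr (fun j g => (T j)^[β j] g) x = L.foldr (fun j g => (T j)^[β' j] g) x := by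
  intro L
  induction L with
  | nil => intro _; rfl
  | cons i L ih =>
    intro h
    simp only [List.foldr_cons]
    rw [h i (List.mem_cons_self), ih fun j hj => h j (List.mem_cons_of_mem i hj)]

lemma foldr_zero_list {X : Type*} (T : Fin d → X → X) (β : Fin d → ℕ) (x : X) :
    ∀ L : List (Fin d), (∀ j ∈ L, β j = 0) →
      L.foldr (fun j g => (T j)^[β j] g) x = x := by
  intro L
  induction L with
  | nil => intro _; rfl
  | cons i L ih =>
    intro h
    simp only [List.foldr_cons]
    rw [ih fun j hj => h j (List.mem_cons_of_mem i hj), h i (List.mem_cons_self)]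
    rfl

lemma foldr_peel {X : Type*} :
    ∀ (n : ℕ) (T : Fin n → X → X) (β : Fin n → ℕ) (i : Fin n) (x : X),
      (∀ j, j < i → β j = 0) →
      (List.finRange n).foldr (fun j g => (T j)^[Function.update β i (β i + 1) j] g) x
        = T i ((List.finRange n).foldr (fun j g => (T j)^[β j] g) x) := by
  intro n
  induction n with
  | zero => intro T β i x _; exact absurd i.2 (by omega)
  | succ n ih =>
    intro T β i x h
    rw [List.finRange_succ, List.foldr_cons, List.foldr_cons, List.foldr_map,
      List.foldr_map]
    by_cases hi : i = 0
    · subst hi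
      have h1 : ∀ j : Fin n,
          Function.update β (0 : Fin (n+1)) (β 0 + 1) (Fin.succ j) = β (Fin.succ j) := by
        intro j
        exact Function.update_of_ne (Fin.succ_ne_zero j) _ _
      rw [foldr_congr_list (fun j => T (Fin.succ j))
        (fun j => Function.update β (0 : Fin (n+1)) (β 0 + 1) (Fin.succ j))
        (fun j => β (Fin.succ j)) x (List.finRange n) (fun j _ => h1 j)]
      rw [Function.update_self]
      exact Function.iterate_succ_apply' _ _ _
    · obtain ⟨i', rfl⟩ : ∃ i' : Fin n, i = Fin.succ i' := ⟨i.pred hi, (Fin.succ_pred i hi).symm⟩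
      have hb0 : β 0 = 0 := h 0 (Fin.succ_pos i')
      have hb0' : Function.update β (Fin.succ i') (β (Fin.succ i') + 1) 0 = 0 := by
        rw [Function.update_of_ne (Ne.symm (Fin.succ_ne_zero i'))]
        exact hb0
      rw [hb0, hb0']
      simp only [Function.iterate_zero, id_eq]
      have h2 : ∀ j : Fin n,
          Function.update β (Fin.succ i') (β (Fin.succ i') + 1) (Fin.succ j)
            = Function.update (fun j => β (Fin.succ j)) i' (β (Fin.succ i') + 1) j := by
        intro j
        by_cases hj : j = i'
        · subst hj; simp
        · rw [Function.update_of_ne (fun hc => hj (Fin.succ_injective n hc)),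
            Function.update_of_ne hj]
      rw [foldr_congr_list (fun j => T (Fin.succ j)) _ _ x (List.finRange n)
        (fun j _ => h2 j)]
      exact ih (fun j => T (Fin.succ j)) (fun j => β (Fin.succ j)) i' x
        (fun j hj => h (Fin.succ j) (by simpa using hj))

lemma mderiv_zero' (β : Fin d → ℕ) (h : ∀ j, β j = 0) (f : (Fin d → ℝ) → ℝ) :
    mderiv β f = f :=
  foldr_zero_list pderiv' β f (List.finRange d) (fun j _ => h j)

lemma mderiv_peel (β : Fin d → ℕ) (i : Fin d) (h : ∀ j, j < i → β j = 0)
    (f : (Fin d → ℝ) → ℝ) :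
    mderiv (Function.update β i (β i + 1)) f = pderiv' i (mderiv β f) := by
  unfold mderiv
  have := foldr_peel d pderiv' β i f h
  convert this using 2

lemma contDiff_pderiv' {f : (Fin d → ℝ) → ℝ} (i : Fin d) (n : ℕ)
    (h : ContDiff ℝ ((n + 1 : ℕ)) f) : ContDiff ℝ (n : ℕ) (pderiv' i f) := by
  have h1 : ContDiff ℝ (n : ℕ) (fderiv ℝ f) := h.fderiv_right (by exact_mod_cast le_rfl)
  exact h1.clm_apply contDiff_const

lemma contDiff_iterate_pderiv' (i : Fin d) (m : ℕ) :
    ∀ (n : ℕ) (f : (Fin d → ℝ) → ℝ), ContDiff ℝ ((n + m : ℕ)) f →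
      ContDiff ℝ (n : ℕ) ((pderiv' i)^[m] f) := by
  induction m with
  | zero => intro n f h; simpa using h
  | succ m ih =>
    intro n f h
    rw [Function.iterate_succ_apply]
    exact ih n (pderiv' i f) (contDiff_pderiv' i (n + m) (by
      have : n + m + 1 = n + (m + 1) := by omega
      rw [this]; exact h))

lemma contDiff_foldr (L : List (Fin d)) :
    ∀ (β : Fin d → ℕ) (n : ℕ) (f : (Fin d → ℝ) → ℝ),
      ContDiff ℝ ((n + (L.map β).sum : ℕ)) f →
      ContDiff ℝ (n : ℕ) (L.foldr (fun j g => (pderiv' j)^[β j] g) f) := by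
  induction L with
  | nil => intro β n f h; simpa using h
  | cons i L ih =>
    intro β n f h
    simp only [List.foldr_cons]
    refine contDiff_iterate_pderiv' i (β i) n _ (ih β (n + β i) f ?_)
    have : n + β i + (L.map β).sum = n + ((i :: L).map β).sum := by
      simp [List.map_cons, List.sum_cons]; omega
    rw [this]; exact h

lemma contDiff_mderiv {k : ℕ} {f : (Fin d → ℝ) → ℝ} (hf : ContDiff ℝ (k : ℕ) f)
    (β : Fin d → ℕ) (n : ℕ) (h : mdeg β + n ≤ k) :
    ContDiff ℝ (n : ℕ) (mderiv β f) := by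
  apply contDiff_foldr (List.finRange d) β n f
  apply hf.of_le
  have hsum : ((List.finRange d).map β).sum = mdeg β := by
    rw [mdeg, Fin.sum_univ_def]
  rw [hsum]
  exact_mod_cast (by omega : n + mdeg β ≤ k)

end MderivLemmas


def idxA (α : Fin d → ℕ) : Finset (Fin d → ℕ) :=
  Fintype.piFinset fun i => Finset.range (α i + 1)

lemma mem_idxA {α β : Fin d → ℕ} : β ∈ idxA α ↔ ∀ j, β j ≤ α j := by
  simp [idxA, Fintype.mem_piFinset, Nat.lt_succ_iff]

lemma TB_one : TB (d := d) 0 1 (fun _ => (1 : ℝ)) := by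
  classical
  have hmem : ((fun _ => 0, fun _ => false) : (Fin d → ℕ) × (Fin d → Bool)) ∈ idxT d 0 := by
    rw [mem_idxT]; intro j; simp
  have h := TB.single ((fun _ => 0, fun _ => false)) hmem 1
  have hfun : (fun θ : Fin d → ℝ => (1:ℝ) * E ((fun _ => 0, fun _ => false)) θ)
      = fun _ => (1:ℝ) := by
    funext θ; simp [E]
  rw [hfun] at h
  simpa using h

lemma main_induction {k : ℕ} {f : (Fin d → ℝ) → ℝ} (hf : ContDiff ℝ (k : ℕ) f) :
    ∀ (m : ℕ) (α : Fin d → ℕ), mdeg α = m → m ≤ k →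
    ∃ P : (Fin d → ℕ) → (Fin d → ℝ) → ℝ,
      (∀ β ∈ idxA α, TB (mdeg α) ((Nat.factorial (mdeg α) : ℝ)) (P β)) ∧
      (∀ θ : Fin d → ℝ, mderiv α (fun t => f (fun i => Real.cos (t i))) θ =
        ∑ β ∈ idxA α, P β θ * mderiv β f (fun i => Real.cos (θ i))) := by
  classical
  intro m
  induction m with
  | zero =>
    intro α hdeg _
    have hz : ∀ j, α j = 0 := fun j => Finset.sum_eq_zero_iff.mp hdeg j (Finset.mem_univ j)
    have hidx : idxA α = {α} := by
      ext β
      rw [mem_idxA, Finset.mem_singleton]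
      constructor
      · intro h; funext j; have h1 := h j; have h2 := hz j; omega
      · intro h; subst h; exact fun j => le_rfl
    refine ⟨fun _ => fun _ => (1 : ℝ), ?_, ?_⟩
    · intro β _
      rw [hdeg]
      simpa using TB_one
    · intro θ
      rw [hidx, Finset.sum_singleton, mderiv_zero' α hz, mderiv_zero' α hz]
      ring
  | succ m ih =>
    intro α hdeg hk
    have hne : (Finset.univ.filter fun j => α j ≠ 0).Nonempty := by
      by_contra hc
      rw [Finset.not_nonempty_iff_eq_empty, Finset.filter_eq_empty_iff] at hc
      have : mdeg α = 0 := Finset.sum_eq_zero fun j hj => not_not.mp (hc hj)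
      omega
    set i := (Finset.univ.filter fun j => α j ≠ 0).min' hne with hi
    have hαi : α i ≠ 0 := by
      have := (Finset.univ.filter fun j => α j ≠ 0).min'_mem hne
      rw [Finset.mem_filter] at this
      exact this.2
    have hmin : ∀ j, j < i → α j = 0 := by
      intro j hj
      by_contra hc
      have hjm : j ∈ Finset.univ.filter fun j => α j ≠ 0 :=
        Finset.mem_filter.mpr ⟨Finset.mem_univ j, hc⟩
      exact absurd (Finset.min'_le _ j hjm) (not_le.mpr hj)
    set β₀ := Function.update α i (α i - 1) with hβ₀
    have hup : Function.update β₀ i (β₀ i + 1) = α := by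
      funext j
      by_cases hj : j = i
      · subst hj; simp [hβ₀]; omega
      · rw [Function.update_of_ne hj, hβ₀, Function.update_of_ne hj]
    have hαj : ∀ j, j ≠ i → α j = β₀ j := by
      intro j hj; rw [hβ₀, Function.update_of_ne hj]
    have hαi' : α i = β₀ i + 1 := by rw [hβ₀]; simp; omega
    have hdegβ₀ : mdeg β₀ = m := by
      have h1 : mdeg α = α i + ∑ j ∈ Finset.univ \ {i}, α j :=
        Finset.sum_eq_add_sum_sdiff_singleton_of_mem (Finset.mem_univ i) α
      have h2 : mdeg β₀ = (α i - 1) + ∑ j ∈ Finset.univ \ {i}, α j := by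
        rw [mdeg, hβ₀, Finset.sum_update_of_mem (Finset.mem_univ i)]
      omega
    have hβ₀min : ∀ j, j < i → β₀ j = 0 := by
      intro j hj
      have hji : j ≠ i := ne_of_lt hj
      rw [hβ₀, Function.update_of_ne hji]
      exact hmin j hj
    obtain ⟨P', hTB, hid⟩ := ih β₀ hdegβ₀ (by omega)
    rw [hdegβ₀] at hTB
    refine ⟨fun γ θ => (if γ i ≤ β₀ i then pderiv' i (P' γ) θ else 0) +
      (if 1 ≤ γ i then (-1 : ℝ) * (Real.sin (θ i) * P' (Function.update γ i (γ i - 1)) θ) else 0),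
      ?_, ?_⟩
    · -- TB bounds
      intro γ hγ
      rw [hdeg]
      have hA : TB (m + 1) ((m : ℝ) * (Nat.factorial m : ℝ))
          (fun θ => if γ i ≤ β₀ i then pderiv' i (P' γ) θ else 0) := by
        by_cases hc : γ i ≤ β₀ i
        · simp only [if_pos hc]
          have hγβ₀ : γ ∈ idxA β₀ := by
            rw [mem_idxA] at hγ ⊢
            intro j
            by_cases hj : j = i
            · subst hj; exact hc
            · rw [← hαj j hj]; exact hγ j
          exact ((hTB γ hγβ₀).pderiv i).mono (by omega) le_rfl
        · simp only [if_neg hc]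
          exact TB.zero (by positivity)
      have hB : TB (m + 1) ((Nat.factorial m : ℝ))
          (fun θ => if 1 ≤ γ i then (-1 : ℝ) * (Real.sin (θ i) * P' (Function.update γ i (γ i - 1)) θ) else 0) := by
        by_cases hc : 1 ≤ γ i
        · simp only [if_pos hc]
          have hmem : Function.update γ i (γ i - 1) ∈ idxA β₀ := by
            rw [mem_idxA] at hγ ⊢
            intro j
            by_cases hj : j = i
            · subst hj
              rw [Function.update_self]
              have := hγ i
              omega
            · rw [Function.update_of_ne hj, ← hαj j hj]
              exact hγ j
          have h1 := ((hTB _ hmem).sin_mul i).smul (-1)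
          simpa using h1
        · simp only [if_neg hc]
          exact TB.zero (by positivity)
      have hAB := hA.add hB
      have hconst : (m : ℝ) * (Nat.factorial m : ℝ) + (Nat.factorial m : ℝ)
          = ((Nat.factorial (m + 1) : ℕ) : ℝ) := by
        rw [Nat.factorial_succ]; push_cast; ring
      rw [hconst] at hAB
      exact hAB
    · -- the identity
      intro θ
      have hL : mderiv α (fun t => f fun j => Real.cos (t j))
          = pderiv' i (mderiv β₀ (fun t => f fun j => Real.cos (t j))) := by
        conv_lhs => rw [← hup]
        exact mderiv_peel β₀ i hβ₀min _
      rw [hL]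
      have hgfun : mderiv β₀ (fun t => f fun j => Real.cos (t j))
          = fun t => ∑ β ∈ idxA β₀, P' β t * mderiv β f (fun j => Real.cos (t j)) :=
        funext hid
      rw [hgfun]
      -- differentiability facts
      have hfd1 : ∀ β ∈ idxA β₀, ContDiff ℝ ((1 : ℕ)) (mderiv β f) := by
        intro β hβ
        apply contDiff_mderiv hf β 1
        have hble : mdeg β ≤ mdeg β₀ := Finset.sum_le_sum fun j _ => (mem_idxA.mp hβ) j
        omega
      have hcosmap : ∀ t : Fin d → ℝ,
          DifferentiableAt ℝ (fun s : Fin d → ℝ => (fun j => Real.cos (s j))) t := by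
        intro t
        rw [differentiableAt_pi]
        intro j
        exact (Real.differentiable_cos.differentiableAt).comp t
          ((ContinuousLinearMap.proj j : (Fin d → ℝ) →L[ℝ] ℝ).differentiableAt)
      have hPdiff : ∀ β ∈ idxA β₀, DifferentiableAt ℝ (P' β) θ := fun β hβ =>
        ((hTB β hβ).contDiff.differentiable (by simp)).differentiableAt
      have hmdiff : ∀ β ∈ idxA β₀, Differentiable ℝ (mderiv β f) := fun β hβ =>
        (hfd1 β hβ).differentiable (by simp)
      have hFdiff : DifferentiableAt ℝ
          (fun t => ∑ β ∈ idxA β₀, P' β t * mderiv β f (fun j => Real.cos (t j))) θ :=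
        DifferentiableAt.fun_sum fun β hβ => (hPdiff β hβ).mul
          (((hmdiff β hβ).differentiableAt).comp θ (hcosmap θ))
      have hslice : ∀ β ∈ idxA β₀,
          HasDerivAt (fun t => P' β (Function.update θ i t)
              * mderiv β f (fun j => Real.cos (Function.update θ i t j)))
            (pderiv' i (P' β) θ * mderiv β f (fun j => Real.cos (θ j)) +
              P' β θ * (pderiv' i (mderiv β f) (fun j => Real.cos (θ j)) * (-Real.sin (θ i))))
            (θ i) := by
        intro β hβ
        have h1 : HasDerivAt (fun t => P' β (Function.update θ i t))
            (pderiv' i (P' β) θ) (θ i) := hasDerivAt_slice i (hPdiff β hβ)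
        have h2 : HasDerivAt
            (fun t => mderiv β f (fun j => Real.cos (Function.update θ i t j)))
            (pderiv' i (mderiv β f) (fun j => Real.cos (θ j)) * (-Real.sin (θ i))) (θ i) := by
          have hs := hasDerivAt_slice i ((hmdiff β hβ).differentiableAt
            (x := fun j => Real.cos (θ j)))
          have hcos : HasDerivAt Real.cos (-Real.sin (θ i)) (θ i) := Real.hasDerivAt_cos (θ i)
          have hcomp := HasDerivAt.comp (θ i) hs hcos
          have hfeq : ((fun s => mderiv β f
                (Function.update (fun j => Real.cos (θ j)) i s)) ∘ Real.cos) =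
              fun t => mderiv β f (fun j => Real.cos (Function.update θ i t j)) := by
            funext t
            simp only [Function.comp]
            congr 1
            funext j
            by_cases hj : j = i
            · subst hj; simp
            · rw [Function.update_of_ne hj, Function.update_of_ne hj]
          rw [hfeq] at hcomp
          exact hcomp
        have hmul := h1.mul h2
        simp only [Function.update_eq_self] at hmul
        exact hmul
      have hDer := HasDerivAt.fun_sum hslice
      rw [pderiv_eq_of_hasDerivAt hFdiff hDer]
      -- regroup the sum
      simp only [add_mul, ite_mul, zero_mul, neg_mul, Finset.sum_add_distrib]
      have hfilt1 : (idxA α).filter (fun γ => γ i ≤ β₀ i) = idxA β₀ := by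
        ext γ
        rw [Finset.mem_filter, mem_idxA, mem_idxA]
        constructor
        · rintro ⟨h1, h2⟩ j
          by_cases hj : j = i
          · subst hj; exact h2
          · rw [← hαj j hj]; exact h1 j
        · intro h
          refine ⟨fun j => ?_, h i⟩
          by_cases hj : j = i
          · subst hj; have h2 := h i; omega
          · rw [hαj j hj]; exact h j
      congr 1
      · -- first part
        rw [← Finset.sum_filter, hfilt1]
      · -- second part
        rw [← Finset.sum_filter]
        refine Finset.sum_nbij' (fun β => Function.update β i (β i + 1))
          (fun γ => Function.update γ i (γ i - 1)) ?_ ?_ ?_ ?_ ?_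
        · intro β hβ
          rw [Finset.mem_filter, mem_idxA]
          rw [mem_idxA] at hβ
          refine ⟨fun j => ?_, by simp⟩
          by_cases hj : j = i
          · subst hj; simp only [Function.update_self]; have := hβ i; omega
          · simp only [Function.update_of_ne hj]; rw [hαj j hj]; exact hβ j
        · intro γ hγ
          rw [Finset.mem_filter, mem_idxA] at hγ
          rw [mem_idxA]
          intro j
          by_cases hj : j = i
          · subst hj; simp only [Function.update_self]; have := hγ.1 i; omega
          · simp only [Function.update_of_ne hj]; rw [← hαj j hj]; exact hγ.1 j
        · intro β hβ
          funext j
          by_cases hj : j = i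
          · subst hj; simp
          · simp only [Function.update_of_ne hj]
        · intro γ hγ
          rw [Finset.mem_filter] at hγ
          funext j
          by_cases hj : j = i
          · subst hj; simp only [Function.update_self]; omega
          · simp only [Function.update_of_ne hj]
        · intro β hβ
          have hpeel : mderiv (Function.update β i (β i + 1)) f = pderiv' i (mderiv β f) := by
            apply mderiv_peel β i
            intro j hj
            have h1 := (mem_idxA.mp hβ) j
            have h2 := hβ₀min j hj
            omega
          rw [hpeel]
          simp only [Function.update_idem, Function.update_self, Nat.add_sub_cancel_left,
            Nat.add_sub_cancel, Function.update_eq_self]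
          ring

end ChainAux

/-- chain rule with bounded trigonometric coefficients: for
`g(θ) = f(cos θ)` and `|α| ≤ k`, `∂_θ^α g = Σ_{β ≤ α} P_{α,β}(θ) (∂_x^β f)(cos θ)`
where each `P_{α,β}` is a trigonometric polynomial of degree at most `|α|` in every
variable and `sup_{θ ∈ [0,π]^d} |P_{α,β}(θ)| ≤ |α|!`. -/
theorem chain_rule_with_bounded_trig_coefficients
    (d k : ℕ) (hd : 1 ≤ d) (f : (Fin d → ℝ) → ℝ) (hf : ContDiff ℝ k f)
    (α : Fin d → ℕ) (hα : mdeg α ≤ k) :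
    ∃ P : (Fin d → ℕ) → (Fin d → ℝ) → ℝ,
      (∀ β ∈ Fintype.piFinset fun i => Finset.range (α i + 1),
        IsTrigPoly d (mdeg α) (P β)) ∧
      (∀ θ : Fin d → ℝ,
        mderiv α (fun t => f (fun i => Real.cos (t i))) θ =
          ∑ β ∈ Fintype.piFinset fun i => Finset.range (α i + 1),
            P β θ * mderiv β f (fun i => Real.cos (θ i))) ∧
      (∀ β ∈ Fintype.piFinset fun i => Finset.range (α i + 1),
        ∀ θ : Fin d → ℝ, (∀ i, θ i ∈ Set.Icc (0 : ℝ) Real.pi) →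
          |P β θ| ≤ (Nat.factorial (mdeg α) : ℝ)) := by
  obtain ⟨P, hTB, hid⟩ := ChainAux.main_induction hf (mdeg α) α rfl hα
  refine ⟨P, ?_, hid, ?_⟩
  · intro β hβ
    obtain ⟨a, hrep, -⟩ := hTB β hβ
    exact ⟨a, hrep⟩
  · intro β hβ θ _
    exact (hTB β hβ).bound θ


end
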